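/- arXiv:2208.08726 — 2 statements merged into one kernel-verified Lean document; each statement's English description precedes it below -/
import Mathlib

section
/- Let G have a negative edge (j,i) with weight W_{j,i} < 0, and two positive edges (k,j), (k,i) with weights W_{k,j}, W_{k,i} satisfying W_{k,j} ≥ −2W_{j,i} and W_{k,i} ≥ −2W_{j,i}. If all three edges are removed from G, yielding Laplacian L_B, then L − L_B is positive semidefinite. -/
open Matrix

/-- Removing a negative edge (j,i) together with two previously-present positive edges
(k,j), (k,i) whose weights satisfy W_{k,j} ≥ −2W_{j,i} and W_{k,i} ≥ −2W_{j,i}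
yields L − L_B positive semidefinite. -/
theorem removing_negative_edge_case1_psd {N : ℕ}
    (W : Matrix (Fin N) (Fin N) ℝ) (hW : W.IsSymm)
    (E : Finset (Fin N × Fin N)) (j i k : Fin N)
    (hji : (j, i) ∈ E) (hkj : (k, j) ∈ E) (hki : (k, i) ∈ E)
    (hneg : W j i < 0) (h1 : -2 * W j i ≤ W k j) (h2 : -2 * W j i ≤ W k i)
    (L LB : Matrix (Fin N) (Fin N) ℝ) (hL : L.IsHermitian) (hLB : LB.IsHermitian)
    (hformL : ∀ x : Fin N → ℝ,
      x ⬝ᵥ L *ᵥ x = ∑ e ∈ E, W e.1 e.2 * (x e.1 - x e.2) ^ 2)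
    (hformLB : ∀ x : Fin N → ℝ,
      x ⬝ᵥ LB *ᵥ x = ∑ e ∈ E \ {(j, i), (k, j), (k, i)}, W e.1 e.2 * (x e.1 - x e.2) ^ 2) :
    (L - LB).PosSemidef := by
  have hWij : W i j = W j i := by
    have := hW
    rw [Matrix.IsSymm] at this
    calc W i j = Wᵀ j i := rfl
    _ = W j i := by rw [this]
  have hkj' : k ≠ j := by
    intro h; subst h
    linarith
  have hki' : k ≠ i := by
    intro h; subst h
    rw [hWij] at h1
    linarith
  rw [Matrix.posSemidef_iff_dotProduct_mulVec]
  constructor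
  · exact hL.sub hLB
  · intro x
    have hstar : star x = x := rfl
    rw [hstar, Matrix.sub_mulVec, dotProduct_sub, hformL, hformLB]
    have hsub : ({(j, i), (k, j), (k, i)} : Finset (Fin N × Fin N)) ⊆ E := by
      intro e he
      simp only [Finset.mem_insert, Finset.mem_singleton] at he
      rcases he with h | h | h <;> subst h <;> assumption
    rw [Finset.sum_sdiff_eq_sub hsub]
    have key : 0 ≤ ∑ e ∈ ({(j, i), (k, j), (k, i)} : Finset (Fin N × Fin N)),
        W e.1 e.2 * (x e.1 - x e.2) ^ 2 := by
      have hji_ne1 : (j, i) ≠ (k, j) := by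
        intro h; exact hkj' (Prod.ext_iff.mp h).1.symm
      have hji_ne2 : (j, i) ≠ (k, i) := by
        intro h; exact hkj' (Prod.ext_iff.mp h).1.symm
      by_cases hij : j = i
      · subst hij
        have : ({(j, j), (k, j), (k, j)} : Finset (Fin N × Fin N)) = {(j, j), (k, j)} := by
          simp
        rw [this, Finset.sum_insert (by simp [hji_ne1]), Finset.sum_singleton]
        simp only [sub_self]
        nlinarith [sq_nonneg (x k - x j)]
      · have hkj_ne : ((k, j) : Fin N × Fin N) ≠ (k, i) := by
          intro h; exact hij (Prod.ext_iff.mp h).2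
        rw [Finset.sum_insert (by simp [hji_ne1, hji_ne2]),
          Finset.sum_insert (by simp [hkj_ne]), Finset.sum_singleton]
        nlinarith [sq_nonneg (x k - x j), sq_nonneg (x k - x i),
          sq_nonneg (x j - x i), sq_nonneg (2 * x k - x j - x i)]
    linarith
end

section
/- A signed graph is balanced (every cycle has an even number of negative edges) if and only if its vertex set can be 2-colored so that every positive edge joins same-colored vertices and every negative edge joins oppositely-colored vertices (Cartwright–Harary theorem). -/
open SimpleGraph

private lemma ch_list_prod_pm : ∀ (l : List ℤ), (∀ x ∈ l, x = 1 ∨ x = -1) →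
    l.prod = 1 ∨ l.prod = -1 := by
  intro l
  induction l with
  | nil => simp
  | cons a l ih =>
    intro h
    have ha := h a (by simp)
    have hl := ih (fun x hx => h x (by simp [hx]))
    rcases ha with h1 | h1 <;> rcases hl with h2 | h2 <;> simp [h1, h2]

private lemma ch_path_loop_edge {V : Type*} {G : SimpleGraph V} {u v : V}
    (p : G.Walk u v) (hp : p.support.Nodup) (he : s(v, u) ∈ p.edges) :
    ∃ (h : G.Adj u v), p = SimpleGraph.Walk.cons h SimpleGraph.Walk.nil := by
  cases p with
  | nil => simp at he
  | cons h' p' =>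
    rw [Walk.support_cons, List.nodup_cons] at hp
    obtain ⟨hu, hnd⟩ := hp
    rw [Walk.edges_cons, List.mem_cons] at he
    rcases he with he | he
    · rw [Sym2.eq_iff] at he
      rcases he with ⟨hvu, hux⟩ | ⟨hvx, -⟩
      · exact absurd (hux ▸ h') (G.loopless.irrefl u)
      · subst hvx
        have hpath : p'.IsPath := (Walk.isPath_def _).2 hnd
        have hnil : p' = Walk.nil :=
          congrArg Subtype.val (SimpleGraph.Path.loop_eq ⟨p', hpath⟩)
        exact ⟨h', by rw [hnil]⟩
    · exact absurd (p'.snd_mem_support_of_mem_edges he) hu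

private lemma ch_closed_walk_prod {V : Type*} {G : SimpleGraph V} {σ : Sym2 V → ℤ}
    (hσ : ∀ e ∈ G.edgeSet, σ e = 1 ∨ σ e = -1)
    (hcyc : ∀ (v : V) (w : G.Walk v v), w.IsCycle → (w.edges.map σ).prod = 1) :
    ∀ (n : ℕ) (v : V) (w : G.Walk v v), w.length = n → (w.edges.map σ).prod = 1 := by
  intro n
  induction n using Nat.strong_induction_on with
  | _ n ih =>
  intro v w hlen
  classical
  by_cases hnd : w.support.tail.Nodup
  · cases w with
    | nil => simp
    | @cons _ u _ h p =>
      rw [Walk.support_cons, List.tail_cons] at hnd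
      by_cases he : s(v, u) ∈ p.edges
      · obtain ⟨h', hp⟩ := ch_path_loop_edge p hnd he
        subst hp
        have hσe := hσ s(v, u) (G.mem_edgeSet.2 h)
        have hswap : s(u, v) = s(v, u) := Sym2.eq_swap
        simp only [Walk.edges_cons, Walk.edges_nil, List.map_cons, List.map_nil,
          List.prod_cons, List.prod_nil, hswap, mul_one]
        rcases hσe with h1 | h1 <;> rw [h1] <;> norm_num
      · have hcycle : (Walk.cons h p).IsCycle :=
          (Walk.cons_isCycle_iff p h).2 ⟨(Walk.isPath_def p).2 hnd, he⟩
        exact hcyc v _ hcycle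
  · obtain ⟨x, hx⟩ := not_forall.1 ((not_iff_not.2 List.nodup_iff_forall_not_duplicate).1 hnd)
    rw [not_not] at hx
    have hx2 : 2 ≤ w.support.tail.count x := List.duplicate_iff_two_le_count.1 hx
    have hxs : x ∈ w.support := List.mem_of_mem_tail hx.mem
    have hrot : ((w.rotate x hxs).edges.map σ).prod = (w.edges.map σ).prod :=
      List.Perm.prod_eq (List.IsRotated.perm (List.IsRotated.map (Walk.rotate_edges w x hxs) σ))
    have hlen' : (w.rotate x hxs).length = n := by
      have h1 := List.Perm.length_eq (List.IsRotated.perm (Walk.rotate_edges w x hxs))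
      rw [Walk.length_edges, Walk.length_edges] at h1
      rw [h1, hlen]
    have hcount : 2 ≤ (w.rotate x hxs).support.tail.count x := by
      rwa [List.Perm.count_eq (List.IsRotated.perm (Walk.support_rotate w x hxs))]
    rw [← hrot]
    generalize hw' : w.rotate x hxs = w' at hlen' hcount
    clear hrot hw' hx hx2 hxs hnd hlen w
    cases w' with
    | nil => simp at hcount
    | @cons _ y _ h p =>
      rw [Walk.support_cons, List.tail_cons] at hcount
      have hxp : x ∈ p.support := List.count_pos_iff.1 (by omega)
      have hspec := p.take_spec hxp
      have hq1 : (p.takeUntil x hxp).support.count x = 1 :=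
        p.count_support_takeUntil_eq_one hxp
      have hcount' : 2 ≤ ((p.takeUntil x hxp).append (p.dropUntil x hxp)).support.count x := by
        rwa [hspec]
      rw [Walk.support_append, List.count_append, hq1] at hcount'
      have hrne : (p.dropUntil x hxp).support.tail ≠ [] := by
        intro hc; rw [hc] at hcount'; simp at hcount'
      have hrlen : 0 < (p.dropUntil x hxp).length := by
        have := (p.dropUntil x hxp).length_support
        rcases Nat.eq_zero_or_pos (p.dropUntil x hxp).length with h0 | h0
        · exfalso
          apply hrne
          have : (p.dropUntil x hxp).support.length = 1 := by omega
          rcases List.length_eq_one_iff.1 this with ⟨a, ha⟩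
          simp [ha]
        · exact h0
      have hlsum : (p.takeUntil x hxp).length + (p.dropUntil x hxp).length = p.length := by
        have := congrArg Walk.length hspec
        rwa [Walk.length_append] at this
      have hplen : p.length + 1 = n := by
        simpa using hlen'
      have ih1 : (((Walk.cons h (p.takeUntil x hxp)).edges.map σ).prod) = 1 := by
        apply ih ((Walk.cons h (p.takeUntil x hxp)).length) (by simp [Walk.length_cons]; omega)
        rfl
      have ih2 : (((p.dropUntil x hxp).edges.map σ).prod) = 1 := by
        apply ih ((p.dropUntil x hxp).length) (by omega)
        rfl
      calc ((Walk.cons h p).edges.map σ).prod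
          = ((Walk.cons h ((p.takeUntil x hxp).append (p.dropUntil x hxp))).edges.map σ).prod := by
            rw [hspec]
        _ = (((Walk.cons h (p.takeUntil x hxp)).edges.map σ).prod) *
              (((p.dropUntil x hxp).edges.map σ).prod) := by
            rw [Walk.edges_cons, Walk.edges_append, List.map_cons, List.map_append,
              List.prod_cons, List.prod_append, Walk.edges_cons, List.map_cons, List.prod_cons]
            ring
        _ = 1 := by rw [ih1, ih2, mul_one]

/-- Cartwright–Harary theorem: a signed graph is balanced (every cycle has sign +1,
equivalently an even number of negative edges) iff its vertices can be 2-colored with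
±1 so that every positive edge joins same-colored vertices and every negative edge joins
oppositely-colored vertices. -/
theorem cartwright_harary {V : Type*} (G : SimpleGraph V)
    (σ : Sym2 V → ℤ) (hσ : ∀ e ∈ G.edgeSet, σ e = 1 ∨ σ e = -1) :
    (∀ (v : V) (w : G.Walk v v), w.IsCycle → (w.edges.map σ).prod = 1) ↔
    ∃ β : V → ℤ, (∀ v, β v = 1 ∨ β v = -1) ∧
      ∀ u v, G.Adj u v → β u * β v = σ s(u, v) := by
  classical
  constructor
  · intro hcyc
    have hreach : ∀ v : V, G.Reachable ((G.connectedComponentMk v).out) v := by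
      intro v
      apply ConnectedComponent.exact
      exact (G.connectedComponentMk v).out_eq
    set β : V → ℤ := fun v => (((hreach v).some).edges.map σ).prod with hβdef
    have hβpm : ∀ v, β v = 1 ∨ β v = -1 := by
      intro v
      apply ch_list_prod_pm
      intro a ha
      obtain ⟨e, he, rfl⟩ := List.mem_map.1 ha
      exact hσ e (Walk.edges_subset_edgeSet _ he)
    refine ⟨β, hβpm, ?_⟩
    intro u v huv
    have hc : (G.connectedComponentMk v).out = (G.connectedComponentMk u).out :=
      congrArg Quot.out (ConnectedComponent.sound huv.reachable).symm
    set p : G.Walk ((G.connectedComponentMk u).out) u := (hreach u).some with hp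
    set q : G.Walk ((G.connectedComponentMk u).out) v := ((hreach v).some.copy hc rfl) with hq
    have hqprod : (q.edges.map σ).prod = β v := by
      rw [hq, Walk.edges_copy]
    have hpprod : (p.edges.map σ).prod = β u := rfl
    set c : G.Walk ((G.connectedComponentMk u).out) ((G.connectedComponentMk u).out) :=
      p.append (Walk.cons huv q.reverse) with hcdef
    have h1 : ((c.edges.map σ)).prod = 1 := ch_closed_walk_prod hσ hcyc c.length _ c rfl
    have h2 : (c.edges.map σ).prod = β u * (σ s(u, v) * β v) := by
      rw [hcdef, Walk.edges_append, Walk.edges_cons, Walk.edges_reverse]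
      rw [List.map_append, List.prod_append, List.map_cons, List.prod_cons,
        List.map_reverse, List.prod_reverse, hpprod, hqprod]
    rw [h2] at h1
    have hσe := hσ s(u, v) (G.mem_edgeSet.2 huv)
    rcases hβpm u with h3 | h3 <;> rcases hβpm v with h4 | h4 <;>
      rcases hσe with h5 | h5 <;> rw [h3, h4, h5] at h1 ⊢ <;> omega
  · rintro ⟨β, hβ, hadj⟩ v w _
    have hsq : ∀ x, β x * β x = 1 := by
      intro x; rcases hβ x with h | h <;> rw [h] <;> norm_num
    have key : ∀ (a b : V) (p : G.Walk a b), (p.edges.map σ).prod = β a * β b := by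
      intro a b p
      induction p with
      | nil =>
        simp only [Walk.edges_nil, List.map_nil, List.prod_nil]
        exact (hsq _).symm
      | @cons a x b h p ih =>
        rw [Walk.edges_cons, List.map_cons, List.prod_cons, ih, ← hadj a x h]
        rcases hβ x with h' | h' <;> rw [h'] <;> ring
    rw [key v v w]
    exact hsq v
end
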